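/- arXiv:1006.3997 — 5 statements merged into one kernel-verified Lean document; each statement's English description precedes it below -/
import Mathlib

section
/- Let 0 ≤ E_0 < E_1 < ... be an increasing sequence with E_{2j-1} = j² + O(1) and E_{2j} = j² + O(1) as j → ∞, and suppose ∑_{j=1}^∞ j^{2k+2}(√(E_{2j}-E_0) - √(E_{2j-1}-E_0))² < ∞ for some integer k > 2. Then ∑_{j=1}^∞ E_{2j-1}(E_{2j} - E_{2j-1}) < ∞. -/
/-- Smooth periodic potentials satisfy condition (1) of Hypothesis 1.1:
if `E_{2j-1} = j² + O(1)`, `E_{2j} = j² + O(1)` and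
`∑ j^{2k+2} (√(E_{2j}-E_0) - √(E_{2j-1}-E_0))² < ∞` for some `k > 2`, then
`∑ E_{2j-1}(E_{2j} - E_{2j-1}) < ∞`.  Here the gap index `j ≥ 1` is encoded as
`j+1` for `j : ℕ`, so `E_{2j-1} = E (2*j+1)` and `E_{2j} = E (2*j+2)`. -/
theorem summable_weighted_gap_lengths
    (E : ℕ → ℝ) (hE0 : 0 ≤ E 0) (hmono : StrictMono E)
    (M : ℝ)
    (hodd : ∀ j : ℕ, |E (2 * j + 1) - ((j : ℝ) + 1) ^ 2| ≤ M)
    (heven : ∀ j : ℕ, |E (2 * j + 2) - ((j : ℝ) + 1) ^ 2| ≤ M)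
    (k : ℕ) (hk : 2 < k)
    (hsum : Summable (fun j : ℕ =>
      ((j : ℝ) + 1) ^ (2 * k + 2) *
        (Real.sqrt (E (2 * j + 2) - E 0) - Real.sqrt (E (2 * j + 1) - E 0)) ^ 2)) :
    Summable (fun j : ℕ => E (2 * j + 1) * (E (2 * j + 2) - E (2 * j + 1))) := by
  set M' : ℝ := max M 0 with hM'
  have hM'0 : 0 ≤ M' := le_max_right _ _
  set C : ℝ := 2 * (1 + M') * (1 + Real.sqrt M') with hC
  have hC0 : 0 ≤ C := by positivity
  set d : ℕ → ℝ := fun j => Real.sqrt (E (2 * j + 2) - E 0) - Real.sqrt (E (2 * j + 1) - E 0)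
    with hddef
  have hEodd0 : ∀ j : ℕ, 0 ≤ E (2 * j + 1) - E 0 := by
    intro j
    have := hmono (show 0 < 2 * j + 1 by omega)
    linarith
  have hEeven0 : ∀ j : ℕ, 0 ≤ E (2 * j + 2) - E 0 := by
    intro j
    have := hmono (show 0 < 2 * j + 2 by omega)
    linarith
  have hd0 : ∀ j, 0 ≤ d j := by
    intro j
    have : E (2 * j + 1) ≤ E (2 * j + 2) := (hmono (show 2 * j + 1 < 2 * j + 2 by omega)).le
    exact sub_nonneg.2 (Real.sqrt_le_sqrt (by linarith))
  -- key pointwise bound: f j ≤ C * (j+1)^3 * d j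
  have key : ∀ j : ℕ,
      E (2 * j + 1) * (E (2 * j + 2) - E (2 * j + 1)) ≤ C * ((j : ℝ) + 1) ^ 3 * d j := by
    intro j
    set n : ℝ := (j : ℝ) + 1 with hn
    have hn1 : 1 ≤ n := by simp [hn]
    have hn0 : 0 < n := by linarith
    set a : ℝ := Real.sqrt (E (2 * j + 2) - E 0)
    set b : ℝ := Real.sqrt (E (2 * j + 1) - E 0)
    have ha0 : 0 ≤ a := Real.sqrt_nonneg _
    have hb0 : 0 ≤ b := Real.sqrt_nonneg _
    have ha2 : a ^ 2 = E (2 * j + 2) - E 0 := Real.sq_sqrt (hEeven0 j)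
    have hb2 : b ^ 2 = E (2 * j + 1) - E 0 := Real.sq_sqrt (hEodd0 j)
    have hba : b ≤ a := by
      have : E (2 * j + 1) ≤ E (2 * j + 2) := (hmono (show 2 * j + 1 < 2 * j + 2 by omega)).le
      exact Real.sqrt_le_sqrt (by linarith)
    have hgap : E (2 * j + 2) - E (2 * j + 1) = (a + b) * (a - b) := by
      have : (a + b) * (a - b) = a ^ 2 - b ^ 2 := by ring
      rw [this, ha2, hb2]; ring
    have hMM : M ≤ M' := le_max_left _ _
    -- bound on a
    have hEeven : E (2 * j + 2) ≤ n ^ 2 + M' := by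
      have := (abs_le.1 (heven j)).2
      simp only [← hn] at this; linarith
    have ha_le : a ≤ n + Real.sqrt M' := by
      have h1 : a ≤ Real.sqrt (n ^ 2 + M') := Real.sqrt_le_sqrt (by linarith)
      have h2 : Real.sqrt (n ^ 2 + M') ≤ n + Real.sqrt M' := by
        rw [show n + Real.sqrt M' = Real.sqrt ((n + Real.sqrt M') ^ 2) from
          (Real.sqrt_sq (by positivity)).symm]
        apply Real.sqrt_le_sqrt
        have hs : Real.sqrt M' ^ 2 = M' := Real.sq_sqrt hM'0
        nlinarith [Real.sqrt_nonneg M']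
      linarith
    have hEodd_le : E (2 * j + 1) ≤ (1 + M') * n ^ 2 := by
      have := (abs_le.1 (hodd j)).2
      simp only [← hn] at this
      have h1n : (1:ℝ) ≤ n ^ 2 := by nlinarith
      nlinarith [mul_le_mul_of_nonneg_left h1n hM'0]
    have hEodd_nn : 0 ≤ E (2 * j + 1) := by
      have := hmono (show 0 < 2 * j + 1 by omega); linarith
    have hab_le : a + b ≤ 2 * (1 + Real.sqrt M') * n := by
      have hsM : 0 ≤ Real.sqrt M' := Real.sqrt_nonneg _
      nlinarith
    have hdnn := hd0 j
    have hdj : d j = a - b := rfl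
    calc E (2 * j + 1) * (E (2 * j + 2) - E (2 * j + 1))
        = E (2 * j + 1) * ((a + b) * (a - b)) := by rw [hgap]
      _ ≤ ((1 + M') * n ^ 2) * ((2 * (1 + Real.sqrt M') * n) * (a - b)) := by
          have h1 : 0 ≤ a - b := by linarith
          have h2 : 0 ≤ a + b := by linarith
          have h3 : (a + b) * (a - b) ≤ (2 * (1 + Real.sqrt M') * n) * (a - b) :=
            mul_le_mul_of_nonneg_right hab_le h1
          have h4 : 0 ≤ (a + b) * (a - b) := mul_nonneg h2 h1
          exact mul_le_mul hEodd_le h3 h4 (by positivity)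
      _ = C * n ^ 3 * d j := by rw [hdj, hC]; ring
  -- second bound: C n^3 d ≤ (C/2) * (1/n^2 + n^(2k+2) d^2)
  have key2 : ∀ j : ℕ,
      C * ((j : ℝ) + 1) ^ 3 * d j ≤
        (C / 2) * (1 / ((j : ℝ) + 1) ^ 2 + ((j : ℝ) + 1) ^ (2 * k + 2) * d j ^ 2) := by
    intro j
    set n : ℝ := (j : ℝ) + 1 with hn
    have hn1 : 1 ≤ n := by simp [hn]
    have hn0 : 0 < n := by linarith
    have hdnn := hd0 j
    set u : ℝ := 1 / n ^ (k - 2) with hu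
    set v : ℝ := n ^ (k + 1) * d j with hv
    have huv : u * v = n ^ 3 * d j := by
      rw [hu, hv]
      have hk3 : k + 1 = 3 + (k - 2) := by omega
      rw [hk3, pow_add]
      field_simp
    have hamgm : 2 * (u * v) ≤ u ^ 2 + v ^ 2 := by nlinarith [two_mul_le_add_sq u v]
    have hu2 : u ^ 2 ≤ 1 / n ^ 2 := by
      rw [hu, div_pow, one_pow, ← pow_mul]
      apply one_div_le_one_div_of_le (by positivity)
      exact pow_le_pow_right₀ hn1 (by omega)
    have hv2 : v ^ 2 = n ^ (2 * k + 2) * d j ^ 2 := by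
      rw [hv, mul_pow, ← pow_mul]
      ring_nf
    have h1 : n ^ 3 * d j ≤ (1 / n ^ 2 + n ^ (2 * k + 2) * d j ^ 2) / 2 := by
      rw [← huv, ← hv2]
      linarith [hamgm, hu2]
    calc C * n ^ 3 * d j = C * (n ^ 3 * d j) := by ring
      _ ≤ C * ((1 / n ^ 2 + n ^ (2 * k + 2) * d j ^ 2) / 2) :=
          mul_le_mul_of_nonneg_left h1 hC0
      _ = (C / 2) * (1 / n ^ 2 + n ^ (2 * k + 2) * d j ^ 2) := by ring
  -- summability of the majorant
  have hg : Summable (fun j : ℕ => 1 / ((j : ℝ) + 1) ^ 2) := by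
    have h := Real.summable_one_div_nat_pow.mpr (le_refl 2)
    have h2 := (summable_nat_add_iff 1).mpr h
    convert h2 using 2 with j
    push_cast
    · rfl
    · push_cast; ring
  have hmaj : Summable (fun j : ℕ =>
      (C / 2) * (1 / ((j : ℝ) + 1) ^ 2 + ((j : ℝ) + 1) ^ (2 * k + 2) * d j ^ 2)) :=
    ((hg.add hsum).mul_left (C / 2))
  apply Summable.of_nonneg_of_le _ (fun j => (key j).trans (key2 j)) hmaj
  intro j
  have h1 : 0 ≤ E (2 * j + 1) := by
    have := hmono (show 0 < 2 * j + 1 by omega); linarith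
  have h2 : E (2 * j + 1) ≤ E (2 * j + 2) := (hmono (show 2 * j + 1 < 2 * j + 2 by omega)).le
  nlinarith
end

section
/- Let E_1 < E_2 < E_3 < ... be positive reals with ∑_{j} 1/E_{2j-1} < ∞ and ∑_j (E_{2j} - E_{2j-1}) < ∞, and for each j let μ_j : ℝ → ℝ be a function with μ_j(x) ∈ [E_{2j-1}, E_{2j}] for all x. Fix z ∈ ℂ and let m ∈ ℕ satisfy |z| ≤ E_{2m-1}. Then for every n > m and every x ∈ ℝ: exp(-∑_{j=n+1}^∞ |z|/(E_{2j-1} - |z|)) ≤ ∏_{j=n+1}^∞ |(z - μ_j(x))/E_{2j-1}| ≤ exp((1/E_{2n+1}) ∑_{j=n+1}^∞ (E_{2j} - E_{2j-1}) + |z| ∑_{j=n+1}^∞ 1/E_{2j-1}). -/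
/-- Two-sided estimate for the tail of the product defining `G(z,x)`:
for `|z| ≤ E_{2m-1}` and `n > m`,
`exp(-∑_{j=n+1}^∞ |z|/(E_{2j-1}-|z|)) ≤ ∏_{j=n+1}^∞ |(z-μ_j(x))/E_{2j-1}|
 ≤ exp((1/E_{2n+1}) ∑_{j=n+1}^∞ (E_{2j}-E_{2j-1}) + |z| ∑_{j=n+1}^∞ 1/E_{2j-1})`.
The tail index `j = n+1+i` for `i : ℕ`, so `E_{2j-1} = E (2*n+2*i+1)` and
`E_{2j} = E (2*n+2*i+2)`. -/
theorem tail_product_estimate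
    (E : ℕ → ℝ) (hE0 : 0 ≤ E 0) (hmono : StrictMono E)
    (μ : ℕ → ℝ → ℝ)
    (hμ : ∀ j : ℕ, 1 ≤ j → ∀ x : ℝ, μ j x ∈ Set.Icc (E (2 * j - 1)) (E (2 * j)))
    (hinv : Summable (fun j : ℕ => 1 / E (2 * j + 1)))
    (hgap : Summable (fun j : ℕ => E (2 * j + 2) - E (2 * j + 1)))
    (z : ℂ) (m : ℕ) (hm : 1 ≤ m) (hz : ‖z‖ ≤ E (2 * m - 1))
    (n : ℕ) (hn : m < n) (x : ℝ) :
    Real.exp (-∑' i : ℕ, ‖z‖ / (E (2 * n + 2 * i + 1) - ‖z‖)) ≤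
      (∏' i : ℕ, ‖(z - (μ (n + 1 + i) x : ℝ)) / (E (2 * n + 2 * i + 1) : ℝ)‖) ∧
    (∏' i : ℕ, ‖(z - (μ (n + 1 + i) x : ℝ)) / (E (2 * n + 2 * i + 1) : ℝ)‖) ≤
      Real.exp ((1 / E (2 * n + 1)) * (∑' i : ℕ, (E (2 * n + 2 * i + 2) - E (2 * n + 2 * i + 1)))
        + ‖z‖ * (∑' i : ℕ, 1 / E (2 * n + 2 * i + 1))) := by
  set c := ‖z‖ with hc
  have hc0 : 0 ≤ c := norm_nonneg z
  have hEpos : ∀ k : ℕ, 1 ≤ k → 0 < E k := fun k hk =>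
    lt_of_le_of_lt hE0 (hmono (by omega : (0:ℕ) < k))
  set A : ℕ → ℝ := fun i => E (2 * n + 2 * i + 1) with hA
  set B : ℕ → ℝ := fun i => E (2 * n + 2 * i + 2) with hB
  set EN : ℝ := E (2 * n + 1) with hEN'
  have hApos : ∀ i, 0 < A i := fun i => hEpos _ (by omega)
  have hENpos : 0 < EN := hEpos _ (by omega)
  have hcN : c < EN := lt_of_le_of_lt hz (hmono (by omega))
  have hNA : ∀ i, EN ≤ A i := fun i => (hmono.le_iff_le).2 (by omega)
  have hcA : ∀ i, c < A i := fun i => lt_of_lt_of_le hcN (hNA i)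
  have hAc : ∀ i, 0 < A i - c := fun i => sub_pos.2 (hcA i)
  have hAB : ∀ i, A i ≤ B i := fun i => (hmono.le_iff_le).2 (by omega)
  set f : ℕ → ℝ := fun i => ‖(z - ((μ (n + 1 + i) x : ℝ) : ℂ)) / ((A i : ℝ) : ℂ)‖ with hf
  have hμb : ∀ i, A i ≤ μ (n + 1 + i) x ∧ μ (n + 1 + i) x ≤ B i := by
    intro i
    have h := hμ (n + 1 + i) (by omega) x
    have e1 : 2 * (n + 1 + i) - 1 = 2 * n + 2 * i + 1 := by omega
    have e2 : 2 * (n + 1 + i) = 2 * n + 2 * i + 2 := by omega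
    rw [e1, e2] at h
    exact ⟨h.1, h.2⟩
  have hμpos : ∀ i, 0 < μ (n + 1 + i) x := fun i => lt_of_lt_of_le (hApos i) (hμb i).1
  have hfval : ∀ i, f i = ‖z - ((μ (n + 1 + i) x : ℝ) : ℂ)‖ / A i := by
    intro i
    rw [hf]
    simp only [norm_div, Complex.norm_real]
    rw [Real.norm_of_nonneg (hApos i).le]
  -- per-factor bounds
  have hlow : ∀ i, (A i - c) / A i ≤ f i := by
    intro i
    rw [hfval i]
    have h1 : ‖((μ (n + 1 + i) x : ℝ) : ℂ)‖ - ‖z‖ ≤ ‖((μ (n + 1 + i) x : ℝ) : ℂ) - z‖ :=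
      norm_sub_norm_le _ _
    rw [Complex.norm_real, Real.norm_of_nonneg (hμpos i).le, norm_sub_rev] at h1
    have h2 := (hμb i).1
    exact div_le_div_of_nonneg_right (by linarith) (hApos i).le
  have hup : ∀ i, f i ≤ (c + B i) / A i := by
    intro i
    rw [hfval i]
    have h1 : ‖z - ((μ (n + 1 + i) x : ℝ) : ℂ)‖ ≤ ‖z‖ + ‖((μ (n + 1 + i) x : ℝ) : ℂ)‖ :=
      norm_sub_le _ _
    rw [Complex.norm_real, Real.norm_of_nonneg (hμpos i).le] at h1
    have h2 := (hμb i).2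
    exact div_le_div_of_nonneg_right (by linarith) (hApos i).le
  have hfpos : ∀ i, 0 < f i := fun i =>
    lt_of_lt_of_le (div_pos (hAc i) (hApos i)) (hlow i)
  set l : ℕ → ℝ := fun i => -(c / (A i - c)) with hl
  set u : ℕ → ℝ := fun i => (B i - A i) / EN + c / A i with hu
  have hexp_low : ∀ i, Real.exp (l i) ≤ (A i - c) / A i := by
    intro i
    have h1 : c / (A i - c) + 1 ≤ Real.exp (c / (A i - c)) := Real.add_one_le_exp _
    have hne : A i - c ≠ 0 := (hAc i).ne'
    have e : c / (A i - c) + 1 = A i / (A i - c) := by field_simp; ring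
    rw [e] at h1
    rw [hl, Real.exp_neg]
    calc (Real.exp (c / (A i - c)))⁻¹ ≤ (A i / (A i - c))⁻¹ := by
          apply inv_anti₀ (div_pos (hApos i) (hAc i)) h1
      _ = (A i - c) / A i := by rw [inv_div]
  have hexp_up : ∀ i, (c + B i) / A i ≤ Real.exp (u i) := by
    intro i
    have hui : u i = (B i - A i) / EN + c / A i := rfl
    rw [hui]
    have hne : A i ≠ 0 := (hApos i).ne'
    have e : (c + B i) / A i = 1 + ((B i - A i) / A i + c / A i) := by
      field_simp
      ring
    have h2 : (B i - A i) / A i ≤ (B i - A i) / EN :=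
      div_le_div_of_nonneg_left (sub_nonneg.2 (hAB i)) hENpos (hNA i) |>.trans_eq rfl
    have h3 : ((B i - A i) / EN + c / A i) + 1 ≤ Real.exp ((B i - A i) / EN + c / A i) :=
      Real.add_one_le_exp _
    rw [e]
    linarith
  set g : ℕ → ℝ := fun i => Real.log (f i) with hg
  have hgl : ∀ i, l i ≤ g i := by
    intro i
    have := Real.log_le_log (Real.exp_pos (l i)) ((hexp_low i).trans (hlow i))
    rwa [Real.log_exp] at this
  have hgu : ∀ i, g i ≤ u i := by
    intro i
    have := Real.log_le_log (hfpos i) ((hup i).trans (hexp_up i))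
    rwa [Real.log_exp] at this
  -- summability
  have h1 : Summable (fun i : ℕ => 1 / A i) := by
    have h := (summable_nat_add_iff n).mpr hinv
    exact h.congr fun i => by rw [hA]; congr 2; omega
  have h2 : Summable (fun i : ℕ => B i - A i) := by
    have h := (summable_nat_add_iff n).mpr hgap
    exact h.congr fun i => by rw [hA, hB]; congr 2 <;> omega
  have hsc : Summable (fun i : ℕ => c / A i) :=
    (h1.mul_left c).congr fun i => mul_one_div c (A i)
  have hsl0 : Summable (fun i : ℕ => c / (A i - c)) := by
    apply Summable.of_nonneg_of_le
      (fun i => div_nonneg hc0 (hAc i).le)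
      (fun i => ?_) (h1.mul_left (c * EN / (EN - c)))
    have hpos : 0 < EN - c := sub_pos.2 hcN
    rw [mul_one_div, div_div]
    rw [div_le_div_iff₀ (hAc i) (mul_pos hpos (hApos i))]
    nlinarith [mul_nonneg (mul_nonneg hc0 hc0) (sub_nonneg.2 (hNA i))]
  have hsl : Summable l := hsl0.neg
  have hsu : Summable u := (h2.div_const EN).add hsc
  have hsg : Summable g := by
    have hd : Summable (fun i => g i - l i) :=
      Summable.of_nonneg_of_le (fun i => sub_nonneg.2 (hgl i))
        (fun i => sub_le_sub (hgu i) le_rfl) (hsu.sub hsl)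
    exact (hd.add hsl).congr fun i => by ring
  -- product = exp of sum of logs
  have hef : (Real.exp ∘ g) = f := funext fun i => Real.exp_log (hfpos i)
  have hp : HasProd f (Real.exp (∑' i, g i)) := by
    have := hsg.hasSum.rexp
    rwa [hef] at this
  have hprod : (∏' i, f i) = Real.exp (∑' i, g i) := hp.tprod_eq
  constructor
  · rw [hprod]
    apply Real.exp_le_exp.2
    rw [← tsum_neg]
    exact Summable.tsum_le_tsum hgl hsl hsg
  · rw [hprod]
    apply Real.exp_le_exp.2
    have hle : ∑' i, g i ≤ ∑' i, u i := Summable.tsum_le_tsum hgu hsg hsu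
    have heq : ∑' i, u i = (1 / EN) * (∑' i, (B i - A i)) + c * (∑' i, 1 / A i) := by
      rw [hu]
      rw [Summable.tsum_add (h2.div_const EN) hsc]
      congr 1
      · rw [tsum_div_const, one_div_mul_eq_div]
      · rw [← tsum_mul_left]
        exact tsum_congr fun i => (mul_one_div c (A i)).symm
    linarith
end

section
/- Let E_j satisfy ∑_j (E_{2j} - E_{2j-1}) < ∞ and ∑_j 1/E_{2j-1} < ∞, let μ_j(x), μ_j(0) ∈ [E_{2j-1}, E_{2j}], and suppose z ∈ ℂ satisfies |z - μ_j(0)| > ε for all j. Then |G(z,x)/G(z,0)| = |∏_{j=1}^∞ (z - μ_j(x))/(z - μ_j(0))| ≤ exp(C/|z|) for a constant C independent of x and z. -/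
set_option maxHeartbeats 1000000

/-- Estimate of `|G(z,x)/G(z,0)| = |∏_j (z-μ_j(x))/(z-μ_j(0))| ≤ exp(C/|z|)`,
with `C` independent of `x` and `z`, for `z` staying at distance `> ε` from all
Dirichlet eigenvalues `μ_j(0)`.  The gap index `j ≥ 1` is encoded as `j+1` for
`j : ℕ`, so gap `j` is `[E (2*j+1), E (2*j+2)]`. -/
theorem G_quotient_bound
    (E : ℕ → ℝ) (hE0 : 0 ≤ E 0) (hmono : StrictMono E)
    (μ : ℕ → ℝ → ℝ)
    (hμ : ∀ j : ℕ, ∀ x : ℝ, μ j x ∈ Set.Icc (E (2 * j + 1)) (E (2 * j + 2)))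
    (hinv : Summable (fun j : ℕ => 1 / E (2 * j + 1)))
    (hgap : Summable (fun j : ℕ => E (2 * j + 2) - E (2 * j + 1)))
    (hgapw : Summable (fun j : ℕ => E (2 * j + 2) * (E (2 * j + 2) - E (2 * j + 1))))
    (ε : ℝ) (hε : 0 < ε) :
    ∃ C : ℝ, ∀ z : ℂ, z ≠ 0 → ∀ x : ℝ,
      (∀ j : ℕ, ε < ‖z - (μ j 0 : ℝ)‖) →
      ‖∏' j : ℕ, (z - (μ j x : ℝ)) / (z - (μ j 0 : ℝ))‖ ≤ Real.exp (C / ‖z‖) := by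
  obtain ⟨γ, hγdef⟩ : ∃ g : ℕ → ℝ, ∀ j, g j = E (2 * j + 2) - E (2 * j + 1) :=
    ⟨_, fun _ => rfl⟩
  obtain ⟨c, hcdef⟩ : ∃ g : ℕ → ℝ,
      ∀ j, g j = 2 * γ j + 2 / ε * (E (2 * j + 2) * γ j) := ⟨_, fun _ => rfl⟩
  have hγ0 : ∀ j, 0 ≤ γ j := by
    intro j; rw [hγdef]; exact sub_nonneg.2 (hmono (by omega)).le
  have hE2 : ∀ j, 0 ≤ E (2 * j + 2) := fun j => hE0.trans (hmono (by omega)).le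
  have hc0 : ∀ j, 0 ≤ c j := by
    intro j
    rw [hcdef]
    have h1 := hγ0 j
    have h2 : 0 ≤ 2 / ε * (E (2 * j + 2) * γ j) :=
      mul_nonneg (by positivity) (mul_nonneg (hE2 j) h1)
    linarith
  have hcs : Summable c := by
    have : Summable (fun j => 2 * γ j + 2 / ε * (E (2 * j + 2) * γ j)) := by
      have hγs : Summable γ := by
        have := hgap; simpa [funext hγdef] using this
      have hγws : Summable (fun j => E (2 * j + 2) * γ j) := by
        have := hgapw; simpa [funext hγdef] using this
      exact (hγs.mul_left 2).add (hγws.mul_left (2 / ε))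
    simpa [funext hcdef] using this
  refine ⟨∑' j, c j, ?_⟩
  intro z hz x hzμ
  have hznorm : (0 : ℝ) < ‖z‖ := norm_pos_iff.2 hz
  have hCz : 0 ≤ (∑' j, c j) / ‖z‖ := div_nonneg (tsum_nonneg hc0) hznorm.le
  set f : ℕ → ℂ := fun j => (z - (μ j x : ℝ)) / (z - (μ j 0 : ℝ)) with hfdef
  have key : ∀ j, ‖f j‖ ≤ Real.exp (c j / ‖z‖) := by
    intro j
    have hμx := hμ j x
    have hμ0 := hμ j 0
    have hden : (0 : ℝ) < ‖z - ((μ j 0 : ℝ) : ℂ)‖ := hε.trans (hzμ j)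
    have hμ0nn : 0 ≤ μ j 0 := (hE0.trans (hmono (by omega)).le).trans hμ0.1
    -- numerator bound
    have hnum : ‖z - ((μ j x : ℝ) : ℂ)‖ ≤ ‖z - ((μ j 0 : ℝ) : ℂ)‖ + γ j := by
      have heq : z - ((μ j x : ℝ) : ℂ)
          = (z - ((μ j 0 : ℝ) : ℂ)) + (((μ j 0 - μ j x : ℝ)) : ℂ) := by
        push_cast; ring
      rw [heq]
      refine (norm_add_le _ _).trans ?_
      have h1 : ‖(((μ j 0 - μ j x : ℝ)) : ℂ)‖ = |μ j 0 - μ j x| := by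
        rw [Complex.norm_real, Real.norm_eq_abs]
      have h2 : |μ j 0 - μ j x| ≤ γ j := by
        rw [hγdef, abs_sub_le_iff]
        exact ⟨by linarith [hμ0.2, hμx.1], by linarith [hμx.2, hμ0.1]⟩
      rw [h1]
      linarith
    -- key comparison: γ j / ‖z - μ j 0‖ ≤ c j / ‖z‖
    have hkey : γ j / ‖z - ((μ j 0 : ℝ) : ℂ)‖ ≤ c j / ‖z‖ := by
      rcases le_or_gt ‖z‖ (2 * E (2 * j + 2)) with h | h
      · have h1 : γ j / ‖z - ((μ j 0 : ℝ) : ℂ)‖ ≤ γ j / ε := by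
          rw [div_le_div_iff₀ hden hε]
          nlinarith [(hzμ j).le, hγ0 j]
        have h2 : γ j / ε ≤ c j / ‖z‖ := by
          rw [div_le_div_iff₀ hε hznorm, hcdef]
          have hγj := hγ0 j
          have hEj := hE2 j
          have hterm : γ j * ‖z‖ ≤ 2 / ε * (E (2 * j + 2) * γ j) * ε := by
            rw [div_mul_eq_mul_div, div_mul_eq_mul_div, mul_div_assoc,
              div_self hε.ne', mul_one]
            nlinarith
          nlinarith [mul_nonneg hγj hε.le]
        linarith
      · have hlow : ‖z‖ / 2 ≤ ‖z - ((μ j 0 : ℝ) : ℂ)‖ := by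
          have h1 : ‖z‖ - ‖((μ j 0 : ℝ) : ℂ)‖ ≤ ‖z - ((μ j 0 : ℝ) : ℂ)‖ :=
            norm_sub_norm_le _ _
          have h2 : ‖((μ j 0 : ℝ) : ℂ)‖ = μ j 0 := by
            rw [Complex.norm_real, Real.norm_eq_abs, abs_of_nonneg hμ0nn]
          have h3 : μ j 0 ≤ E (2 * j + 2) := hμ0.2
          linarith
        have h1 : γ j / ‖z - ((μ j 0 : ℝ) : ℂ)‖ ≤ γ j / (‖z‖ / 2) := by
          rw [div_le_div_iff₀ hden (by positivity)]
          nlinarith [hγ0 j, hlow]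
        have h2 : γ j / (‖z‖ / 2) = 2 * γ j / ‖z‖ := by
          rw [div_div_eq_mul_div]; ring
        have h3 : 2 * γ j / ‖z‖ ≤ c j / ‖z‖ := by
          apply div_le_div_of_nonneg_right ?_ hznorm.le
          rw [hcdef]
          have hγj := hγ0 j
          have h4 : 0 ≤ 2 / ε * (E (2 * j + 2) * γ j) :=
            mul_nonneg (by positivity) (mul_nonneg (hE2 j) hγj)
          linarith
        linarith
    have hfn : ‖f j‖ ≤ 1 + γ j / ‖z - ((μ j 0 : ℝ) : ℂ)‖ := by
      have hf : f j = (z - ((μ j x : ℝ) : ℂ)) / (z - ((μ j 0 : ℝ) : ℂ)) := rfl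
      rw [hf, norm_div, div_le_iff₀ hden, add_mul, one_mul,
        div_mul_cancel₀ _ hden.ne']
      exact hnum
    calc ‖f j‖ ≤ 1 + γ j / ‖z - ((μ j 0 : ℝ) : ℂ)‖ := hfn
      _ ≤ 1 + c j / ‖z‖ := by linarith
      _ ≤ Real.exp (c j / ‖z‖) := by
          have := Real.add_one_le_exp (c j / ‖z‖)
          linarith
  by_cases hm : Multipliable f
  · have hbound : ∀ s : Finset ℕ, ‖∏ j ∈ s, f j‖ ≤ Real.exp ((∑' j, c j) / ‖z‖) := by
      intro s
      calc ‖∏ j ∈ s, f j‖ = ∏ j ∈ s, ‖f j‖ := norm_prod _ _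
        _ ≤ ∏ j ∈ s, Real.exp (c j / ‖z‖) :=
            Finset.prod_le_prod (fun j _ => norm_nonneg _) (fun j _ => key j)
        _ = Real.exp (∑ j ∈ s, c j / ‖z‖) := (Real.exp_sum _ _).symm
        _ ≤ Real.exp ((∑' j, c j) / ‖z‖) := by
            apply Real.exp_le_exp.2
            rw [← Finset.sum_div]
            apply div_le_div_of_nonneg_right ?_ hznorm.le
            exact Summable.sum_le_tsum s (fun j _ => hc0 j) hcs
    have hp : HasProd f (∏' j, f j) := hm.hasProd
    have htend : Filter.Tendsto (fun s : Finset ℕ => ‖∏ j ∈ s, f j‖)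
        Filter.atTop (nhds ‖∏' j, f j‖) :=
      (continuous_norm.tendsto _).comp hp
    exact le_of_tendsto htend (Filter.Eventually.of_forall hbound)
  · rw [tprod_eq_one_of_not_multipliable hm]
    simpa using Real.one_le_exp hCz
end

section
/- Let f : ℝ → ℂ and K : {(x,y) : y ≥ x} → ℝ be measurable with |K(x,y)| ≤ C(x) Q(x+y) where Q(x) = ∫_{x/2}^∞ |q̃(s)| ds and ∫_ℝ (1+|x|²)|q̃(x)| dx < ∞. If f ∈ L²([x₀, ∞)) then for every x ≥ x₀ the function h(x) = f(x) + ∫_x^∞ K(x,y) f(y) dy is well defined and h ∈ L²([x₀, ∞)). -/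
open MeasureTheory


private lemma key_swap (a : ℝ) (g : ℝ → ENNReal) (hg : Measurable g) :
    ∫⁻ x in Set.Ioi a, ∫⁻ y in Set.Ioi x, g y
      = ∫⁻ y in Set.Ioi a, ENNReal.ofReal (y - a) * g y := by
  set F : ℝ × ℝ → ENNReal :=
    fun p => Set.indicator {p : ℝ × ℝ | p.1 < p.2} (fun p => g p.2) p with hF
  have hFm : Measurable F :=
    (hg.comp measurable_snd).indicator (measurableSet_lt measurable_fst measurable_snd)
  have h1 : ∀ x : ℝ, ∫⁻ y in Set.Ioi x, g y = ∫⁻ y, F (x, y) := by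
    intro x
    rw [← lintegral_indicator measurableSet_Ioi]
    refine lintegral_congr fun y => ?_
    by_cases h : x < y <;> simp [hF, Set.indicator, h]
  calc ∫⁻ x in Set.Ioi a, ∫⁻ y in Set.Ioi x, g y
      = ∫⁻ x in Set.Ioi a, ∫⁻ y, F (x, y) := lintegral_congr fun x => h1 x
    _ = ∫⁻ y, ∫⁻ x in Set.Ioi a, F (x, y) := lintegral_lintegral_swap hFm.aemeasurable
    _ = ∫⁻ y, ENNReal.ofReal (y - a) * g y := by
        refine lintegral_congr fun y => ?_
        have h2 : ∀ x : ℝ, F (x, y) = Set.indicator (Set.Iio y) (fun _ => g y) x := by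
          intro x
          by_cases h : x < y <;> simp [hF, Set.indicator, h]
        simp_rw [h2]
        rw [lintegral_indicator measurableSet_Iio, setLIntegral_const,
          Measure.restrict_apply measurableSet_Iio]
        have : Set.Iio y ∩ Set.Ioi a = Set.Ioo a y := by
          ext t; simp [Set.mem_Ioo, and_comm]
        rw [this, Real.volume_Ioo, mul_comm]
    _ = ∫⁻ y in Set.Ioi a, ENNReal.ofReal (y - a) * g y := by
        rw [← lintegral_indicator measurableSet_Ioi]
        refine lintegral_congr fun y => ?_
        by_cases h : a < y
        · simp [Set.indicator, h]
        · simp [Set.indicator, h, ENNReal.ofReal_of_nonpos (sub_nonpos.mpr (le_of_not_gt h))]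

private lemma moment_finite (q : ℝ → ℝ) (hqm : Measurable q)
    (hq : Integrable (fun x => (1 + |x| ^ 2) * |q x|))
    (Q : ℝ → ℝ) (hQ : ∀ x, Q x = ∫ s in Set.Ioi (x / 2), |q s|) (x₀ : ℝ) :
    ∫⁻ y in Set.Ioi x₀, ENNReal.ofReal (y - x₀) * ENNReal.ofReal (Q (x₀ + y)) < ⊤ := by
  have hqabs : Integrable (fun s => |q s|) := by
    refine hq.mono hqm.abs.aestronglyMeasurable ?_
    refine Filter.Eventually.of_forall fun s => ?_
    have h1 : (0:ℝ) ≤ |q s| := abs_nonneg _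
    have h2 : (0:ℝ) ≤ |s| ^ 2 := sq_nonneg _
    rw [Real.norm_eq_abs, Real.norm_eq_abs, abs_abs,
      abs_of_nonneg (show (0:ℝ) ≤ (1 + |s| ^ 2) * |q s| by positivity)]
    nlinarith
  have hQl : ∀ u : ℝ, ENNReal.ofReal (Q u)
      = ∫⁻ s in Set.Ioi (u / 2), ENNReal.ofReal |q s| := by
    intro u
    rw [hQ u]
    exact ofReal_integral_eq_lintegral_ofReal hqabs.integrableOn
      (Filter.Eventually.of_forall fun s => abs_nonneg _)
  set W : ℝ × ℝ → ENNReal := fun p =>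
    Set.indicator {p : ℝ × ℝ | (x₀ + p.1) / 2 < p.2}
      (fun p => ENNReal.ofReal (p.1 - x₀) * ENNReal.ofReal |q p.2|) p with hW
  have hWm : Measurable W := by
    refine Measurable.indicator ?_ ?_
    · exact ((ENNReal.measurable_ofReal.comp (measurable_fst.sub measurable_const))).mul
        (ENNReal.measurable_ofReal.comp (hqm.comp measurable_snd).abs)
    · exact measurableSet_lt ((measurable_const.add measurable_fst).div_const 2) measurable_snd
  have h1 : ∀ y : ℝ, ENNReal.ofReal (y - x₀) * ENNReal.ofReal (Q (x₀ + y))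
      = ∫⁻ s, W (y, s) := by
    intro y
    rw [hQl, ← lintegral_const_mul' _ _ ENNReal.ofReal_ne_top,
      ← lintegral_indicator (measurableSet_Ioi)]
    refine lintegral_congr fun s => ?_
    by_cases h : (x₀ + y) / 2 < s <;> simp [hW, Set.indicator, h, Set.mem_Ioi]
  calc ∫⁻ y in Set.Ioi x₀, ENNReal.ofReal (y - x₀) * ENNReal.ofReal (Q (x₀ + y))
      = ∫⁻ y in Set.Ioi x₀, ∫⁻ s, W (y, s) := lintegral_congr fun y => h1 y
    _ = ∫⁻ s, ∫⁻ y in Set.Ioi x₀, W (y, s) := lintegral_lintegral_swap hWm.aemeasurable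
    _ ≤ ∫⁻ s, ENNReal.ofReal ((8 + 8 * x₀ ^ 2) * ((1 + |s| ^ 2) * |q s|)) := by
        refine lintegral_mono fun s => ?_
        calc ∫⁻ y in Set.Ioi x₀, W (y, s)
            ≤ ∫⁻ y in Set.Ioi x₀,
              Set.indicator (Set.Iio (2 * s - x₀))
                (fun _ => ENNReal.ofReal (2 * (s - x₀)) * ENNReal.ofReal |q s|) y := by
              refine lintegral_mono fun y => ?_
              by_cases h : (x₀ + y) / 2 < s
              · have hy : y < 2 * s - x₀ := by linarith
                have : y - x₀ ≤ 2 * (s - x₀) := by linarith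
                simp only [hW, Set.indicator, h, Set.mem_setOf_eq, if_true, Set.mem_Iio, hy]
                exact mul_le_mul_left (ENNReal.ofReal_le_ofReal this) _
              · simp [hW, Set.indicator, h]
          _ = ENNReal.ofReal (2 * (s - x₀)) * ENNReal.ofReal |q s|
                * volume (Set.Iio (2 * s - x₀) ∩ Set.Ioi x₀) := by
              rw [lintegral_indicator measurableSet_Iio, setLIntegral_const,
                Measure.restrict_apply measurableSet_Iio]
          _ ≤ ENNReal.ofReal ((8 + 8 * x₀ ^ 2) * ((1 + |s| ^ 2) * |q s|)) := by
              by_cases hs : x₀ < s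
              · have : Set.Iio (2 * s - x₀) ∩ Set.Ioi x₀ = Set.Ioo x₀ (2 * s - x₀) := by
                  ext t; simp [Set.mem_Ioo, and_comm]
                rw [this, Real.volume_Ioo]
                have hs2 : (0:ℝ) ≤ 2 * (s - x₀) := by linarith
                rw [← ENNReal.ofReal_mul hs2,
                  ← ENNReal.ofReal_mul (mul_nonneg hs2 (abs_nonneg _))]
                refine ENNReal.ofReal_le_ofReal ?_
                have h2 : (0:ℝ) ≤ |q s| := abs_nonneg _
                have h3 : 2 * s - x₀ - x₀ = 2 * (s - x₀) := by ring
                rw [h3, sq_abs]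
                nlinarith [sq_nonneg (s - x₀), sq_nonneg (s + x₀), sq_nonneg (s * x₀ - 1),
                  sq_nonneg (s * x₀ + 1), sq_nonneg s, sq_nonneg x₀]
              · have : ENNReal.ofReal (2 * (s - x₀)) = 0 := by
                  rw [ENNReal.ofReal_eq_zero]; push_neg at hs; linarith
                rw [this, zero_mul, zero_mul]
                exact zero_le
    _ < ⊤ := by
        have hconst : (0:ℝ) ≤ 8 + 8 * x₀ ^ 2 := by positivity
        calc ∫⁻ s, ENNReal.ofReal ((8 + 8 * x₀ ^ 2) * ((1 + |s| ^ 2) * |q s|))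
            = ENNReal.ofReal (8 + 8 * x₀ ^ 2)
              * ∫⁻ s, ENNReal.ofReal ((1 + |s| ^ 2) * |q s|) := by
              rw [← lintegral_const_mul' _ _ ENNReal.ofReal_ne_top]
              exact lintegral_congr fun s => (ENNReal.ofReal_mul hconst)
          _ < ⊤ := by
              refine ENNReal.mul_lt_top ENNReal.ofReal_lt_top ?_
              have h := hq.hasFiniteIntegral
              rw [hasFiniteIntegral_iff_ofReal] at h
              · exact h
              · exact Filter.Eventually.of_forall fun s => by positivity

/-- The transformation operator `I + K` maps `L²([x₀,∞))` into itself: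
if `|K(x,y)| ≤ C(x) Q(x+y)` for `y ≥ x`, with `C` positive and decreasing,
`Q(x) = ∫_{x/2}^∞ |q̃|`, `∫(1+|x|²)|q̃| < ∞`, and `f ∈ L²([x₀,∞))`, then
`h(x) = f(x) + ∫_x^∞ K(x,y) f(y) dy` is well defined for `x ≥ x₀` and
`h ∈ L²([x₀,∞))`. -/
theorem transformation_operator_maps_L2
    (q : ℝ → ℝ) (hqm : Measurable q)
    (hq : Integrable (fun x => (1 + |x| ^ 2) * |q x|))
    (Q : ℝ → ℝ) (hQ : ∀ x, Q x = ∫ s in Set.Ioi (x / 2), |q s|)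
    (K : ℝ → ℝ → ℝ) (hKm : Measurable (Function.uncurry K))
    (C : ℝ → ℝ) (hC : ∀ x, 0 < C x) (hCmono : Antitone C)
    (hK : ∀ x y : ℝ, x ≤ y → |K x y| ≤ C x * Q (x + y))
    (x₀ : ℝ) (f : ℝ → ℂ)
    (hf : MemLp f 2 (volume.restrict (Set.Ici x₀))) :
    (∀ x : ℝ, x₀ ≤ x →
      Integrable (fun y => (K x y : ℂ) * f y) (volume.restrict (Set.Ioi x))) ∧
    MemLp (fun x => f x + ∫ y in Set.Ioi x, (K x y : ℂ) * f y) 2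
      (volume.restrict (Set.Ici x₀)) := by
  -- basic facts about q and Q
  have hqabs : Integrable (fun s => |q s|) := by
    refine hq.mono hqm.abs.aestronglyMeasurable ?_
    refine Filter.Eventually.of_forall fun s => ?_
    have h1 : (0:ℝ) ≤ |q s| := abs_nonneg _
    have h2 : (0:ℝ) ≤ |s| ^ 2 := sq_nonneg _
    rw [Real.norm_eq_abs, Real.norm_eq_abs, abs_abs,
      abs_of_nonneg (show (0:ℝ) ≤ (1 + |s| ^ 2) * |q s| by positivity)]
    nlinarith
  set A : ℝ := ∫ s, |q s| with hA
  have hQnonneg : ∀ u, 0 ≤ Q u := fun u => by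
    rw [hQ]; exact setIntegral_nonneg measurableSet_Ioi fun s _ => abs_nonneg _
  have hQA : ∀ u, Q u ≤ A := fun u => by
    rw [hQ, hA]
    exact setIntegral_le_integral hqabs (Filter.Eventually.of_forall fun s => abs_nonneg _)
  have hQanti : Antitone Q := by
    intro u v huv
    rw [hQ, hQ]
    refine setIntegral_mono_set hqabs.integrableOn
      (Filter.Eventually.of_forall fun s => abs_nonneg _)
      (HasSubset.Subset.eventuallyLE ?_)
    exact Set.Ioi_subset_Ioi (by linarith)
  have hQm : Measurable Q := hQanti.measurable
  set B : ℝ := C x₀ with hB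
  have hBpos : 0 < B := hC x₀
  have hum : Measurable (fun y : ℝ => Q (x₀ + y)) := hQm.comp (measurable_id.const_add x₀)
  have hsqm : Measurable (fun y : ℝ => Q (x₀ + y) ^ 2) := hum.pow_const 2
  -- finiteness lemmas
  have F1 := moment_finite q hqm hq Q hQ x₀
  have F2 : ∫⁻ y in Set.Ioi x₀, ENNReal.ofReal (Q (x₀ + y)) < ⊤ := by
    have hsplit : Set.Ioi x₀ = Set.Ioc x₀ (x₀ + 1) ∪ Set.Ioi (x₀ + 1) :=
      (Set.Ioc_union_Ioi_eq_Ioi (by linarith)).symm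
    rw [hsplit, lintegral_union measurableSet_Ioi Set.Ioc_disjoint_Ioi_same]
    refine ENNReal.add_lt_top.mpr ⟨?_, ?_⟩
    · calc ∫⁻ y in Set.Ioc x₀ (x₀ + 1), ENNReal.ofReal (Q (x₀ + y))
          ≤ ∫⁻ _ in Set.Ioc x₀ (x₀ + 1), ENNReal.ofReal A :=
            lintegral_mono fun y => ENNReal.ofReal_le_ofReal (hQA _)
        _ = ENNReal.ofReal A * volume (Set.Ioc x₀ (x₀ + 1)) := setLIntegral_const _ _
        _ < ⊤ := by
            rw [Real.volume_Ioc]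
            exact ENNReal.mul_lt_top ENNReal.ofReal_lt_top ENNReal.ofReal_lt_top
    · calc ∫⁻ y in Set.Ioi (x₀ + 1), ENNReal.ofReal (Q (x₀ + y))
          ≤ ∫⁻ y in Set.Ioi (x₀ + 1),
              ENNReal.ofReal (y - x₀) * ENNReal.ofReal (Q (x₀ + y)) := by
            refine setLIntegral_mono
              ((ENNReal.measurable_ofReal.comp (measurable_id.sub_const x₀)).mul
                (ENNReal.measurable_ofReal.comp hum)) fun y hy => ?_
            refine le_mul_of_one_le_left zero_le ?_
            rw [Set.mem_Ioi] at hy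
            exact ENNReal.one_le_ofReal.mpr (by linarith)
        _ ≤ ∫⁻ y in Set.Ioi x₀,
              ENNReal.ofReal (y - x₀) * ENNReal.ofReal (Q (x₀ + y)) :=
            lintegral_mono_set (Set.Ioi_subset_Ioi (by linarith))
        _ < ⊤ := F1
  have hsqle : ∀ y : ℝ, ENNReal.ofReal (Q (x₀ + y) ^ 2)
      ≤ ENNReal.ofReal A * ENNReal.ofReal (Q (x₀ + y)) := by
    intro y
    rw [← ENNReal.ofReal_mul (le_trans (hQnonneg (x₀ + y)) (hQA (x₀ + y)))]
    refine ENNReal.ofReal_le_ofReal ?_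
    have h1 := hQnonneg (x₀ + y); have h2 := hQA (x₀ + y)
    nlinarith
  have F3 : ∫⁻ y in Set.Ioi x₀, ENNReal.ofReal (Q (x₀ + y) ^ 2) < ⊤ := by
    calc ∫⁻ y in Set.Ioi x₀, ENNReal.ofReal (Q (x₀ + y) ^ 2)
        ≤ ∫⁻ y in Set.Ioi x₀, ENNReal.ofReal A * ENNReal.ofReal (Q (x₀ + y)) :=
          lintegral_mono fun y => hsqle y
      _ = ENNReal.ofReal A * ∫⁻ y in Set.Ioi x₀, ENNReal.ofReal (Q (x₀ + y)) :=
          lintegral_const_mul' _ _ ENNReal.ofReal_ne_top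
      _ < ⊤ := ENNReal.mul_lt_top ENNReal.ofReal_lt_top F2
  have hIntSq : ∀ x : ℝ, x₀ ≤ x → IntegrableOn (fun y => Q (x₀ + y) ^ 2) (Set.Ioi x) := by
    intro x hx
    refine ⟨hsqm.aestronglyMeasurable, ?_⟩
    rw [hasFiniteIntegral_iff_ofReal (Filter.Eventually.of_forall fun y => sq_nonneg _)]
    exact lt_of_le_of_lt (lintegral_mono_set (Set.Ioi_subset_Ioi hx)) F3
  -- facts about f
  have hfae := hf.aestronglyMeasurable
  have hf2 : Integrable (fun y => ‖f y‖ ^ 2) (volume.restrict (Set.Ici x₀)) :=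
    (memLp_two_iff_integrable_sq hfae.norm).mp hf.norm
  have hsub : ∀ x : ℝ, x₀ ≤ x → Set.Ioi x ⊆ Set.Ici x₀ :=
    fun x hx y hy => le_trans hx (le_of_lt hy)
  have hfaes : ∀ x : ℝ, x₀ ≤ x → AEStronglyMeasurable f (volume.restrict (Set.Ioi x)) :=
    fun x hx => hfae.mono_measure (Measure.restrict_mono (hsub x hx) le_rfl)
  -- the function G
  set G : ℝ → ℝ := fun x => ∫ y in Set.Ioi (max x x₀), Q (x₀ + y) ^ 2 with hG
  have hGanti : Antitone G := by
    intro x x' h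
    refine setIntegral_mono_set (hIntSq (max x x₀) (le_max_right _ _))
      (Filter.Eventually.of_forall fun y => sq_nonneg _)
      (HasSubset.Subset.eventuallyLE (Set.Ioi_subset_Ioi (max_le_max h le_rfl)))
  have hGm : Measurable G := hGanti.measurable
  have hGnonneg : ∀ x, 0 ≤ G x := fun x =>
    setIntegral_nonneg measurableSet_Ioi fun y _ => sq_nonneg _
  have hGeq : ∀ x : ℝ, x₀ ≤ x → G x = ∫ y in Set.Ioi x, Q (x₀ + y) ^ 2 := by
    intro x hx
    rw [hG]
    simp only [max_eq_left hx]
  have hGint : Integrable G (volume.restrict (Set.Ici x₀)) := by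
    refine ⟨hGm.aestronglyMeasurable, ?_⟩
    rw [hasFiniteIntegral_iff_ofReal (Filter.Eventually.of_forall fun x => hGnonneg x)]
    rw [show volume.restrict (Set.Ici x₀) = volume.restrict (Set.Ioi x₀) from
      (Measure.restrict_congr_set Ioi_ae_eq_Ici).symm]
    have heq : ∫⁻ x in Set.Ioi x₀, ENNReal.ofReal (G x)
        = ∫⁻ x in Set.Ioi x₀, ∫⁻ y in Set.Ioi x, ENNReal.ofReal (Q (x₀ + y) ^ 2) := by
      refine setLIntegral_congr_fun measurableSet_Ioi
        (fun x hx => ?_)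
      rw [hGeq x (le_of_lt hx)]
      exact ofReal_integral_eq_lintegral_ofReal (hIntSq x (le_of_lt hx))
        (Filter.Eventually.of_forall fun y => sq_nonneg _)
    rw [heq, key_swap x₀ (fun y => ENNReal.ofReal (Q (x₀ + y) ^ 2)) hsqm.ennreal_ofReal]
    calc ∫⁻ y in Set.Ioi x₀, ENNReal.ofReal (y - x₀) * ENNReal.ofReal (Q (x₀ + y) ^ 2)
        ≤ ∫⁻ y in Set.Ioi x₀,
            ENNReal.ofReal A * (ENNReal.ofReal (y - x₀) * ENNReal.ofReal (Q (x₀ + y))) := by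
          refine lintegral_mono fun y => ?_
          calc ENNReal.ofReal (y - x₀) * ENNReal.ofReal (Q (x₀ + y) ^ 2)
              ≤ ENNReal.ofReal (y - x₀)
                * (ENNReal.ofReal A * ENNReal.ofReal (Q (x₀ + y))) :=
                mul_le_mul_right (hsqle y) _
            _ = ENNReal.ofReal A
                * (ENNReal.ofReal (y - x₀) * ENNReal.ofReal (Q (x₀ + y))) := by ring
      _ = ENNReal.ofReal A
          * ∫⁻ y in Set.Ioi x₀, ENNReal.ofReal (y - x₀) * ENNReal.ofReal (Q (x₀ + y)) :=
          lintegral_const_mul' _ _ ENNReal.ofReal_ne_top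
      _ < ⊤ := ENNReal.mul_lt_top ENNReal.ofReal_lt_top F1
  -- pointwise bound on the kernel
  have hKb : ∀ x y : ℝ, x₀ ≤ x → x < y →
      ‖(K x y : ℂ) * f y‖ ≤ B * (Q (x₀ + y) * ‖f y‖) := by
    intro x y hx hy
    rw [norm_mul, Complex.norm_real, Real.norm_eq_abs]
    have h1 : |K x y| ≤ B * Q (x₀ + y) := by
      refine le_trans (hK x y (le_of_lt hy)) ?_
      have hCx : C x ≤ B := hCmono hx
      have hQ1 : Q (x + y) ≤ Q (x₀ + y) := hQanti (by linarith)
      nlinarith [hQnonneg (x + y), (hC x).le, hQnonneg (x₀ + y)]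
    calc |K x y| * ‖f y‖ ≤ B * Q (x₀ + y) * ‖f y‖ :=
          mul_le_mul_of_nonneg_right h1 (norm_nonneg _)
      _ = B * (Q (x₀ + y) * ‖f y‖) := by ring
  -- integrability of the majorant
  have hw : ∀ x : ℝ, x₀ ≤ x →
      Integrable (fun y => Q (x₀ + y) * ‖f y‖) (volume.restrict (Set.Ioi x)) := by
    intro x hx
    have hf2x : Integrable (fun y => ‖f y‖ ^ 2) (volume.restrict (Set.Ioi x)) :=
      hf2.mono_measure (Measure.restrict_mono (hsub x hx) le_rfl)
    have hmaj : Integrable (fun y => Q (x₀ + y) ^ 2 + ‖f y‖ ^ 2)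
        (volume.restrict (Set.Ioi x)) := (hIntSq x hx).add hf2x
    refine Integrable.mono' hmaj
      (hum.aestronglyMeasurable.mul (hfaes x hx).norm)
      (Filter.Eventually.of_forall fun y => ?_)
    rw [Real.norm_eq_abs, abs_of_nonneg (mul_nonneg (hQnonneg _) (norm_nonneg _))]
    nlinarith [sq_nonneg (Q (x₀ + y) - ‖f y‖), hQnonneg (x₀ + y), norm_nonneg (f y)]
  -- part 1
  have part1 : ∀ x : ℝ, x₀ ≤ x →
      Integrable (fun y => (K x y : ℂ) * f y) (volume.restrict (Set.Ioi x)) := by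
    intro x hx
    have hKxm : Measurable (fun y => K x y) := hKm.comp measurable_prodMk_left
    refine Integrable.mono' ((hw x hx).const_mul B)
      (((Complex.measurable_ofReal.comp hKxm).aestronglyMeasurable).mul (hfaes x hx)) ?_
    filter_upwards [ae_restrict_mem measurableSet_Ioi] with y hy
    exact hKb x y hx hy
  refine ⟨part1, ?_⟩
  -- the L² majorant
  set sqf : ℝ := (∫ y in Set.Ici x₀, ‖f y‖ ^ 2) ^ (1/2 : ℝ) with hsqf
  have hsqf0 : 0 ≤ sqf := Real.rpow_nonneg (integral_nonneg fun y => sq_nonneg _) _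
  set g : ℝ → ℝ := fun x => B * (Real.sqrt (G x) * sqf) with hgdef
  have hg0 : ∀ x, 0 ≤ g x := fun x =>
    mul_nonneg hBpos.le (mul_nonneg (Real.sqrt_nonneg _) hsqf0)
  have hgmem : MemLp g 2 (volume.restrict (Set.Ici x₀)) := by
    have hgm : Measurable g :=
      ((hGm.sqrt.mul_const sqf).const_mul B)
    rw [memLp_two_iff_integrable_sq hgm.aestronglyMeasurable]
    have hsq : (fun x => g x ^ 2) = fun x => B ^ 2 * sqf ^ 2 * G x := by
      funext x
      have hx : Real.sqrt (G x) ^ 2 = G x := Real.sq_sqrt (hGnonneg x)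
      calc (B * (Real.sqrt (G x) * sqf)) ^ 2
          = B ^ 2 * sqf ^ 2 * Real.sqrt (G x) ^ 2 := by ring
        _ = B ^ 2 * sqf ^ 2 * G x := by rw [hx]
    rw [hsq]
    exact hGint.const_mul _
  -- Cauchy–Schwarz pointwise bound
  have hrpow2 : ∀ t : ℝ, t ^ (2 : ℝ) = t ^ 2 := fun t => by
    rw [show (2:ℝ) = ((2:ℕ):ℝ) by norm_num, Real.rpow_natCast]
  have hCS : ∀ x : ℝ, x₀ ≤ x → ‖∫ y in Set.Ioi x, (K x y : ℂ) * f y‖ ≤ g x := by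
    intro x hx
    have hfx : MemLp f 2 (volume.restrict (Set.Ioi x)) :=
      hf.mono_measure (Measure.restrict_mono (hsub x hx) le_rfl)
    have huMem : MemLp (fun y => Q (x₀ + y)) 2 (volume.restrict (Set.Ioi x)) := by
      rw [memLp_two_iff_integrable_sq hum.aestronglyMeasurable]
      exact hIntSq x hx
    have h22 : Real.HolderConjugate 2 2 := Real.HolderConjugate.two_two
    have hofReal2 : ENNReal.ofReal (2:ℝ) = (2 : ENNReal) := by
      simp [ENNReal.ofReal_ofNat]
    calc ‖∫ y in Set.Ioi x, (K x y : ℂ) * f y‖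
        ≤ ∫ y in Set.Ioi x, ‖(K x y : ℂ) * f y‖ := norm_integral_le_integral_norm _
      _ ≤ ∫ y in Set.Ioi x, B * (Q (x₀ + y) * ‖f y‖) := by
          refine integral_mono_ae (part1 x hx).norm ((hw x hx).const_mul B) ?_
          filter_upwards [ae_restrict_mem measurableSet_Ioi] with y hy
          exact hKb x y hx hy
      _ = B * ∫ y in Set.Ioi x, Q (x₀ + y) * ‖f y‖ := integral_const_mul B _
      _ ≤ B * ((∫ y in Set.Ioi x, Q (x₀ + y) ^ (2:ℝ)) ^ (1/2 : ℝ)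
            * (∫ y in Set.Ioi x, ‖f y‖ ^ (2:ℝ)) ^ (1/2 : ℝ)) := by
          refine mul_le_mul_of_nonneg_left ?_ hBpos.le
          refine integral_mul_le_Lp_mul_Lq_of_nonneg h22
            (Filter.Eventually.of_forall fun y => hQnonneg _)
            (Filter.Eventually.of_forall fun y => norm_nonneg _) ?_ ?_
          · rw [hofReal2]; exact huMem
          · rw [hofReal2]; exact hfx.norm
      _ ≤ g x := by
          rw [hgdef]
          refine mul_le_mul_of_nonneg_left ?_ hBpos.le
          have e1 : (∫ y in Set.Ioi x, Q (x₀ + y) ^ (2:ℝ)) ^ (1/2 : ℝ)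
              = Real.sqrt (G x) := by
            rw [Real.sqrt_eq_rpow, hGeq x hx]
            congr 1
            exact integral_congr_ae (Filter.Eventually.of_forall fun y => hrpow2 _)
          have e2 : (∫ y in Set.Ioi x, ‖f y‖ ^ (2:ℝ)) ^ (1/2 : ℝ) ≤ sqf := by
            rw [hsqf]
            refine Real.rpow_le_rpow (integral_nonneg fun y =>
              Real.rpow_nonneg (norm_nonneg _) _) ?_ (by norm_num)
            have : ∫ y in Set.Ioi x, ‖f y‖ ^ (2:ℝ)
                = ∫ y in Set.Ioi x, ‖f y‖ ^ 2 :=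
              integral_congr_ae (Filter.Eventually.of_forall fun y => hrpow2 _)
            rw [this]
            refine setIntegral_mono_set hf2
              (Filter.Eventually.of_forall fun y => sq_nonneg _)
              (HasSubset.Subset.eventuallyLE (hsub x hx))
          rw [e1]
          exact mul_le_mul_of_nonneg_left e2 (Real.sqrt_nonneg _)
  -- a.e. strong measurability of the transform
  set φ : ℝ → ℂ := hfae.mk f with hφdef
  have hφsm : StronglyMeasurable φ := hfae.stronglyMeasurable_mk
  have hfeq : ∀ᵐ y ∂(volume : Measure ℝ), y ∈ Set.Ici x₀ → f y = φ y :=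
    (ae_restrict_iff' measurableSet_Ici).mp hfae.ae_eq_mk
  have hTeq : ∀ x ∈ Set.Ici x₀,
      (∫ y in Set.Ioi x, (K x y : ℂ) * f y) = ∫ y in Set.Ioi x, (K x y : ℂ) * φ y := by
    intro x hx
    refine integral_congr_ae ?_
    have h1 : ∀ᵐ y ∂(volume.restrict (Set.Ioi x)), y ∈ Set.Ici x₀ → f y = φ y :=
      ae_restrict_of_ae hfeq
    filter_upwards [h1, ae_restrict_mem measurableSet_Ioi] with y h2 h3
    rw [h2 (hsub x hx h3)]
  set T' : ℝ → ℂ := fun x => ∫ y, Set.indicator {p : ℝ × ℝ | p.1 < p.2}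
      (fun p => (K p.1 p.2 : ℂ) * φ p.2) (x, y) with hT'
  have hT'sm : StronglyMeasurable T' := by
    apply StronglyMeasurable.integral_prod_right'
      (f := fun p : ℝ × ℝ => Set.indicator {p : ℝ × ℝ | p.1 < p.2}
        (fun p => (K p.1 p.2 : ℂ) * φ p.2) p)
    refine StronglyMeasurable.indicator ?_
      (measurableSet_lt measurable_fst measurable_snd)
    exact ((Complex.measurable_ofReal.comp hKm).stronglyMeasurable).mul
      (hφsm.comp_measurable measurable_snd)
  have hT'eq : ∀ x : ℝ, T' x = ∫ y in Set.Ioi x, (K x y : ℂ) * φ y := by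
    intro x
    rw [hT', ← integral_indicator measurableSet_Ioi]
    refine integral_congr_ae (Filter.Eventually.of_forall fun y => ?_)
    by_cases h : x < y <;> simp [Set.indicator, h]
  have hTaesm : AEStronglyMeasurable (fun x => ∫ y in Set.Ioi x, (K x y : ℂ) * f y)
      (volume.restrict (Set.Ici x₀)) := by
    refine hT'sm.aestronglyMeasurable.congr ?_
    refine (ae_restrict_iff' measurableSet_Ici).mpr
      (Filter.Eventually.of_forall fun x hx => ?_)
    rw [hT'eq x, ← hTeq x hx]
  have hTmem : MemLp (fun x => ∫ y in Set.Ioi x, (K x y : ℂ) * f y) 2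
      (volume.restrict (Set.Ici x₀)) := by
    refine MemLp.of_le hgmem hTaesm ?_
    filter_upwards [ae_restrict_mem measurableSet_Ici] with x hx
    rw [Real.norm_of_nonneg (hg0 x)]
    exact hCS x hx
  exact hf.add hTmem
end

section
/- Let G, H, N, Y be functions satisfying G(z,x) N(z,x) + H(z,x)² = Y(z), H = (1/2) ∂_x G, and ∂_x² G(z,x) = 2((p(x) - z) G(z,x) - N(z,x)), with G(z,x) ≠ 0. Then m(z,x) := (H(z,x) ± Y(z)^{1/2})/G(z,x) satisfies the Riccati equation ∂_x m + m² = p(x) - z. -/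
/-- Levitan's identities imply the Riccati equation: if
`G N + H² = Y`, `H = (1/2)∂ₓG` (i.e. `G' = 2H`), `H' = (p - z)G - N`
(i.e. `∂ₓ²G = 2((p-z)G - N)`), and `G ≠ 0`, then `m = (H ± Y^{1/2})/G`
(with `w² = Y` encoding either branch of the square root) satisfies
`∂ₓ m + m² = p - z`. -/
theorem riccati_from_levitan_identities
    (p : ℝ → ℝ) (z : ℂ) (Y w : ℂ) (hw : w ^ 2 = Y)
    (G H N : ℝ → ℂ)
    (hGN : ∀ x, G x * N x + (H x) ^ 2 = Y)
    (hG' : ∀ x, HasDerivAt G (2 * H x) x)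
    (hH' : ∀ x, HasDerivAt H (((p x : ℂ) - z) * G x - N x) x)
    (hGne : ∀ x, G x ≠ 0)
    (m : ℝ → ℂ) (hm : ∀ x, m x = (H x + w) / G x) :
    ∀ x, HasDerivAt m (((p x : ℂ) - z) - (m x) ^ 2) x := by
  intro x
  have hmf : m = fun x => (H x + w) / G x := funext hm
  have hd := (((hH' x).add_const w).div (hG' x) (hGne x))
  rw [show ((fun x => H x + w) / G) = m from hmf.symm] at hd
  refine hd.congr_deriv (Eq.symm ?_)
  rw [hm x]
  have hY := hGN x
  field_simp [hGne x]
  linear_combination hGN x - hw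
end
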